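/- The function K₀(x) = ∫₀^∞ exp(−x·cosh t) dt is twice differentiable on (0, ∞) and satisfies the modified Bessel differential equation of order zero: x·K₀''(x) + K₀'(x) − x·K₀(x) = 0 for every x > 0. -/

import Mathlib

/-- Modified Bessel function of the first kind of order zero. -/
noncomputable def I0 (x : ℝ) : ℝ := ∑' k : ℕ, (x / 2) ^ (2 * k) / ((Nat.factorial k : ℝ)) ^ 2

/-- Modified Bessel function of the first kind of order one. -/
noncomputable def I1 (x : ℝ) : ℝ :=
  ∑' k : ℕ, (x / 2) ^ (2 * k + 1) / ((Nat.factorial k : ℝ) * (Nat.factorial (k + 1) : ℝ))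

/-- Modified Bessel function of the second kind of order zero. -/
noncomputable def K0 (x : ℝ) : ℝ := ∫ t in Set.Ioi (0 : ℝ), Real.exp (-x * Real.cosh t)

/-- Modified Bessel function of the second kind of order one. -/
noncomputable def K1 (x : ℝ) : ℝ :=
  ∫ t in Set.Ioi (0 : ℝ), Real.exp (-x * Real.cosh t) * Real.cosh t

open Real MeasureTheory Set Filter Metric

noncomputable def B (n : ℕ) (x : ℝ) : ℝ :=
  ∫ t in Set.Ioi (0 : ℝ), Real.exp (-x * Real.cosh t) * Real.cosh t ^ n

lemma cosh_ge_half (t : ℝ) (ht : 0 ≤ t) : (1 + t) / 2 ≤ Real.cosh t := by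
  have h1 : t + 1 ≤ Real.exp t := Real.add_one_le_exp t
  have h2 : 0 < Real.exp (-t) := Real.exp_pos _
  rw [Real.cosh_eq]
  linarith

lemma bound_aux (n : ℕ) {x : ℝ} (hx : 0 < x) {t : ℝ} (ht : 0 ≤ t) :
    Real.exp (-x * Real.cosh t) * Real.cosh t ^ n ≤
      (n.factorial * (2 / x) ^ n * Real.exp (-(x / 4))) * Real.exp (-(x / 4) * t) := by
  have hc1 : (1 : ℝ) ≤ Real.cosh t := Real.one_le_cosh t
  have hc0 : (0 : ℝ) < Real.cosh t := lt_of_lt_of_le one_pos hc1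
  -- cosh t ^ n ≤ n! (2/x)^n exp(x cosh t / 2)
  have key : Real.cosh t ^ n ≤ n.factorial * (2 / x) ^ n * Real.exp (x * Real.cosh t / 2) := by
    have h := Real.pow_div_factorial_le_exp (x := x * Real.cosh t / 2) (by positivity) n
    have h2 : (x * Real.cosh t / 2) ^ n / n.factorial ≤ Real.exp (x * Real.cosh t / 2) := h
    have h3 : Real.cosh t ^ n = (x * Real.cosh t / 2) ^ n * (2 / x) ^ n := by
      rw [← mul_pow]; congr 1; field_simp
    rw [h3]
    have hf : (0:ℝ) < n.factorial := by positivity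
    calc (x * Real.cosh t / 2) ^ n * (2 / x) ^ n
        ≤ (Real.exp (x * Real.cosh t / 2) * n.factorial) * (2 / x) ^ n := by
          apply mul_le_mul_of_nonneg_right _ (by positivity)
          rw [div_le_iff₀ hf] at h2; linarith
      _ = n.factorial * (2 / x) ^ n * Real.exp (x * Real.cosh t / 2) := by ring
  have half : Real.exp (-x * Real.cosh t) * Real.exp (x * Real.cosh t / 2)
      = Real.exp (-(x / 2) * Real.cosh t) := by
    rw [← Real.exp_add]; congr 1; ring
  have decay : Real.exp (-(x / 2) * Real.cosh t) ≤ Real.exp (-(x/4)) * Real.exp (-(x / 4) * t) := by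
    rw [← Real.exp_add, Real.exp_le_exp]
    have := cosh_ge_half t ht
    nlinarith [this, hx]
  calc Real.exp (-x * Real.cosh t) * Real.cosh t ^ n
      ≤ Real.exp (-x * Real.cosh t) * (n.factorial * (2 / x) ^ n * Real.exp (x * Real.cosh t / 2)) :=
        mul_le_mul_of_nonneg_left key (Real.exp_pos _).le
    _ = (n.factorial * (2 / x) ^ n) * (Real.exp (-x * Real.cosh t) * Real.exp (x * Real.cosh t / 2)) := by ring
    _ = (n.factorial * (2 / x) ^ n) * Real.exp (-(x / 2) * Real.cosh t) := by rw [half]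
    _ ≤ (n.factorial * (2 / x) ^ n) * (Real.exp (-(x/4)) * Real.exp (-(x / 4) * t)) := by
        apply mul_le_mul_of_nonneg_left decay (by positivity)
    _ = (n.factorial * (2 / x) ^ n * Real.exp (-(x / 4))) * Real.exp (-(x / 4) * t) := by ring

lemma integrable_B (n : ℕ) {x : ℝ} (hx : 0 < x) :
    IntegrableOn (fun t => Real.exp (-x * Real.cosh t) * Real.cosh t ^ n) (Set.Ioi (0:ℝ)) := by
  have hcont : Continuous (fun t => Real.exp (-x * Real.cosh t) * Real.cosh t ^ n) := by
    continuity
  have hint : IntegrableOn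
      (fun t => (n.factorial * (2 / x) ^ n * Real.exp (-(x / 4))) * Real.exp (-(x / 4) * t))
      (Set.Ioi (0:ℝ)) := by
    exact (exp_neg_integrableOn_Ioi 0 (by positivity : (0:ℝ) < x/4)).const_mul _
  apply MeasureTheory.Integrable.mono hint hcont.aestronglyMeasurable.restrict
  filter_upwards [ae_restrict_mem measurableSet_Ioi] with t ht
  have ht0 : (0:ℝ) ≤ t := le_of_lt ht
  have h1 := bound_aux n hx ht0
  have hpos : 0 ≤ Real.exp (-x * Real.cosh t) * Real.cosh t ^ n := by positivity
  rw [Real.norm_eq_abs, Real.norm_eq_abs, abs_of_nonneg hpos, abs_of_nonneg (by positivity)]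
  exact h1

lemma hasDerivAt_inner (t : ℝ) (n : ℕ) (y : ℝ) :
    HasDerivAt (fun y : ℝ => Real.exp (-y * Real.cosh t) * Real.cosh t ^ n)
      (-(Real.exp (-y * Real.cosh t) * Real.cosh t ^ (n + 1))) y := by
  have h1 : HasDerivAt (fun y : ℝ => -y * Real.cosh t) (-Real.cosh t) y := by
    simpa [neg_mul, mul_comm] using ((hasDerivAt_id y).const_mul (-Real.cosh t))
  have h2 := (h1.exp).mul_const (Real.cosh t ^ n)
  refine h2.congr_deriv ?_
  rw [pow_succ]; ring

lemma hasDerivAt_B (n : ℕ) {x : ℝ} (hx : 0 < x) :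
    HasDerivAt (B n) (-(B (n + 1) x)) x := by
  have heps : (0:ℝ) < x / 2 := by positivity
  have key := hasDerivAt_integral_of_dominated_loc_of_deriv_le (μ := volume.restrict (Set.Ioi (0:ℝ)))
    (F := fun y t => Real.exp (-y * Real.cosh t) * Real.cosh t ^ n)
    (F' := fun y t => -(Real.exp (-y * Real.cosh t) * Real.cosh t ^ (n + 1)))
    (x₀ := x)
    (bound := fun t => Real.exp (-(x/2) * Real.cosh t) * Real.cosh t ^ (n + 1))
    (ball_mem_nhds x heps)
    (Filter.Eventually.of_forall fun y => by
      exact (Continuous.aestronglyMeasurable (by continuity)).restrict)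
    (integrable_B n hx)
    ((Continuous.aestronglyMeasurable (by continuity)).restrict)
    (Filter.Eventually.of_forall fun t => by
      intro y hy
      have hy2 : x / 2 ≤ y := by
        have := abs_lt.1 (mem_ball_iff_norm.1 hy)
        linarith [this.1, this.2]
      have hpos : (0:ℝ) < Real.cosh t := lt_of_lt_of_le one_pos (Real.one_le_cosh t)
      rw [norm_neg, Real.norm_eq_abs, abs_of_nonneg (by positivity)]
      apply mul_le_mul_of_nonneg_right _ (by positivity)
      rw [Real.exp_le_exp]
      nlinarith)
    (integrable_B (n+1) heps)
    (Filter.Eventually.of_forall fun t => fun y _ => hasDerivAt_inner t n y)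
  have h2 := key.2
  rw [MeasureTheory.integral_neg] at h2
  exact h2

lemma K0_eq_B0 : K0 = B 0 := by
  funext x; unfold K0 B; simp

lemma deriv_K0 {x : ℝ} (hx : 0 < x) : deriv K0 x = -(B 1 x) := by
  rw [K0_eq_B0]
  exact (hasDerivAt_B 0 hx).deriv

lemma deriv_K0_eventually {x : ℝ} (hx : 0 < x) :
    deriv K0 =ᶠ[nhds x] fun y => -(B 1 y) := by
  filter_upwards [Ioi_mem_nhds hx] with y hy
  exact deriv_K0 hy

lemma deriv2_K0 {x : ℝ} (hx : 0 < x) : deriv (deriv K0) x = B 2 x := by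
  rw [Filter.EventuallyEq.deriv_eq (deriv_K0_eventually hx)]
  have h := ((hasDerivAt_B 1 hx).neg)
  simpa using h.deriv

lemma ibp {x : ℝ} (hx : 0 < x) : B 1 x = x * (B 2 x - B 0 x) := by
  set f : ℝ → ℝ := fun t => Real.exp (-x * Real.cosh t) * Real.sinh t with hf
  set f' : ℝ → ℝ := fun t => Real.exp (-x * Real.cosh t) * Real.cosh t ^ 1
      - x * (Real.exp (-x * Real.cosh t) * Real.cosh t ^ 2)
      + x * (Real.exp (-x * Real.cosh t) * Real.cosh t ^ 0) with hf'
  have hderiv : ∀ t ∈ Set.Ici (0:ℝ), HasDerivAt f (f' t) t := by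
    intro t _
    have h1 : HasDerivAt (fun t : ℝ => -x * Real.cosh t) (-x * Real.sinh t) t :=
      (Real.hasDerivAt_cosh t).const_mul (-x)
    have h2 := (h1.exp).mul (Real.hasDerivAt_sinh t)
    refine h2.congr_deriv ?_
    have : Real.cosh t ^ 2 = Real.sinh t ^ 2 + 1 := Real.cosh_sq t
    simp only [hf']
    rw [this]; ring
  have hint : IntegrableOn f' (Set.Ioi (0:ℝ)) :=
    (((integrable_B 1 hx).sub ((integrable_B 2 hx).const_mul x)).add
      ((integrable_B 0 hx).const_mul x))
  have htend : Tendsto f atTop (nhds 0) := by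
    apply squeeze_zero_norm' (a := fun t => (Nat.factorial 1 * (2 / x) ^ 1 * Real.exp (-(x / 4))) * Real.exp (-(x / 4) * t))
    · filter_upwards [eventually_ge_atTop (0:ℝ)] with t ht
      have h1 : |Real.sinh t| ≤ Real.cosh t := by
        rw [abs_le, Real.cosh_eq, Real.sinh_eq]
        constructor <;> nlinarith [Real.exp_pos t, Real.exp_pos (-t)]
      calc ‖f t‖ = Real.exp (-x * Real.cosh t) * |Real.sinh t| := by
            rw [hf]; rw [Real.norm_eq_abs, abs_mul, abs_of_nonneg (Real.exp_pos _).le]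
        _ ≤ Real.exp (-x * Real.cosh t) * Real.cosh t ^ 1 := by
            rw [pow_one]; exact mul_le_mul_of_nonneg_left h1 (Real.exp_pos _).le
        _ ≤ _ := bound_aux 1 hx ht
    · have h1 : Tendsto (fun t : ℝ => -(x / 4) * t) atTop atBot :=
        (tendsto_const_mul_atBot_of_neg (by linarith : -(x/4) < 0)).2 tendsto_id
      have h2 : Tendsto (fun t : ℝ => Real.exp (-(x / 4) * t)) atTop (nhds 0) :=
        Real.tendsto_exp_atBot.comp h1
      have h3 := h2.const_mul ((Nat.factorial 1 : ℝ) * (2 / x) ^ 1 * Real.exp (-(x / 4)))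
      rw [mul_zero] at h3
      exact h3
  have h0 : f 0 = 0 := by simp [hf]
  have := integral_Ioi_of_hasDerivAt_of_tendsto
    ((hderiv 0 Set.self_mem_Ici).continuousAt.continuousWithinAt)
    (fun t ht => hderiv t (Set.mem_Ici.2 (le_of_lt ht))) hint htend
  rw [h0, sub_zero] at this
  have hsplit : ∫ t in Set.Ioi (0:ℝ), f' t
      = B 1 x - x * B 2 x + x * B 0 x := by
    simp only [hf']
    have hAB : IntegrableOn (fun t => Real.exp (-x * Real.cosh t) * Real.cosh t ^ 1
        - x * (Real.exp (-x * Real.cosh t) * Real.cosh t ^ 2)) (Set.Ioi (0:ℝ)) :=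
      (integrable_B 1 hx).sub ((integrable_B 2 hx).const_mul x)
    rw [MeasureTheory.integral_add hAB ((integrable_B 0 hx).const_mul x)]
    rw [MeasureTheory.integral_sub (integrable_B 1 hx) ((integrable_B 2 hx).const_mul x),
      MeasureTheory.integral_const_mul, MeasureTheory.integral_const_mul]
    rfl
  rw [hsplit] at this
  linarith

/-- `K₀` is twice differentiable on `(0,∞)` and satisfies the modified Bessel equation of
order zero there: `x K₀'' + K₀' − x K₀ = 0`. -/
theorem stmt9 :
    (∀ x ∈ Set.Ioi (0 : ℝ), DifferentiableAt ℝ K0 x) ∧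
    (∀ x ∈ Set.Ioi (0 : ℝ), DifferentiableAt ℝ (deriv K0) x) ∧
    (∀ x : ℝ, 0 < x → x * deriv (deriv K0) x + deriv K0 x - x * K0 x = 0) := by
  refine ⟨fun x hx => ?_, fun x hx => ?_, fun x hx => ?_⟩
  · rw [K0_eq_B0]; exact (hasDerivAt_B 0 hx).differentiableAt
  · exact (((hasDerivAt_B 1 hx).neg).differentiableAt).congr_of_eventuallyEq
      (deriv_K0_eventually hx)
  · have h1 := deriv_K0 hx
    have h2 := deriv2_K0 hx
    have h3 : K0 x = B 0 x := by rw [K0_eq_B0]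
    have h4 := ibp hx
    rw [h1, h2, h3]
    linarith
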